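/- Suppose L ≥ [H]^𝒪 (some element of [H]^𝒪 is contained in L) and L_g^H := L ∩ gHg⁻¹ lies in [H]^𝒪. Then the normalizer of L_g^H in L equals N_G(gHg⁻¹) ∩ L. -/

import Mathlib

/-- A transfer system on a group `G`: a partial order `rel` on subgroups refining the
subgroup relation, closed under conjugation and restriction. -/
structure TransferSystem (G : Type*) [Group G] where
  rel : Subgroup G → Subgroup G → Prop
  le_of_rel : ∀ {K H : Subgroup G}, rel K H → K ≤ H
  refl : ∀ H : Subgroup G, rel H H
  trans : ∀ {J K H : Subgroup G}, rel J K → rel K H → rel J H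
  antisymm : ∀ {K H : Subgroup G}, rel K H → rel H K → K = H
  conj : ∀ (g : G) {K H : Subgroup G}, rel K H →
    rel (K.map (MulAut.conj g).toMonoidHom) (H.map (MulAut.conj g).toMonoidHom)
  restrict : ∀ {K H L : Subgroup G}, rel K H → L ≤ H → rel (K ⊓ L) L

/-- Conjugate subgroup `gKg⁻¹`. -/
def conjSub {G : Type*} [Group G] (g : G) (K : Subgroup G) : Subgroup G :=
  K.map (MulAut.conj g).toMonoidHom

/-- `H_𝒪(J)`: the minimal subgroup containing `J` which transfers to `G` (the top subgroup). -/
noncomputable def HO {G : Type*} [Group G] (O : TransferSystem G) (J : Subgroup G) : Subgroup G :=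
  sInf {H : Subgroup G | O.rel H ⊤ ∧ J ≤ H}

/-- `J ∈ [H]^𝒪`: the inseparability class of `H`, i.e. `H_𝒪(J)` is conjugate to `H`. -/
def inClass {G : Type*} [Group G] (O : TransferSystem G) (H J : Subgroup G) : Prop :=
  ∃ g : G, conjSub g (HO O J) = H

/-- `J` and `K` are 𝒪-inseparable: `H_𝒪(J)` and `H_𝒪(K)` are conjugate. -/
def TSInseparable {G : Type*} [Group G] (O : TransferSystem G) (J K : Subgroup G) : Prop :=
  ∃ g : G, conjSub g (HO O J) = HO O K

section Aux
variable {G : Type*} [Group G]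

lemma mem_conjSub {g x : G} {K : Subgroup G} : x ∈ conjSub g K ↔ g⁻¹ * x * g ∈ K := by
  simp only [conjSub, Subgroup.mem_map, MulEquiv.coe_toMonoidHom, MulAut.conj_apply]
  constructor
  · rintro ⟨y, hy, rfl⟩; group; simpa using hy
  · intro h; exact ⟨g⁻¹ * x * g, h, by group⟩

lemma conjSub_conjSub (a b : G) (K : Subgroup G) :
    conjSub a (conjSub b K) = conjSub (a * b) K := by
  ext x; simp [mem_conjSub, mul_assoc]

lemma conjSub_one (K : Subgroup G) : conjSub 1 K = K := by
  ext x; simp [mem_conjSub]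

lemma conjSub_mono (a : G) {K M : Subgroup G} (h : K ≤ M) : conjSub a K ≤ conjSub a M := by
  intro x hx; rw [mem_conjSub] at *; exact h hx

lemma conjSub_top (a : G) : conjSub a (⊤ : Subgroup G) = ⊤ := by
  ext x; simp [mem_conjSub]

lemma conjSub_inf (a : G) (K M : Subgroup G) :
    conjSub a (K ⊓ M) = conjSub a K ⊓ conjSub a M := by
  ext x; simp [mem_conjSub, Subgroup.mem_inf]

lemma mem_normalizer_iff_conjSub {x : G} {K : Subgroup G} :
    x ∈ Subgroup.normalizer (K : Set G) ↔ conjSub x K = K := by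
  rw [Subgroup.mem_normalizer_iff]
  constructor
  · intro h; ext y
    rw [mem_conjSub, h (x⁻¹ * y * x)]
    have : x * (x⁻¹ * y * x) * x⁻¹ = y := by group
    rw [this]
  · intro h y
    constructor
    · intro hy
      rw [← h, mem_conjSub]
      have : x⁻¹ * (x * y * x⁻¹) * x = y := by group
      rw [this]; exact hy
    · intro hy
      rw [← h, mem_conjSub] at hy
      have : x⁻¹ * (x * y * x⁻¹) * x = y := by group
      rwa [this] at hy

lemma card_conjSub (a : G) (K : Subgroup G) : Nat.card (conjSub a K) = Nat.card K :=
  (Nat.card_congr (K.equivMapOfInjective (MulAut.conj a).toMonoidHom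
    (MulAut.conj a).injective).toEquiv).symm

lemma subgroup_eq_of_le_of_card_le [Finite G] {K M : Subgroup G} (h : K ≤ M)
    (hc : Nat.card M ≤ Nat.card K) : K = M := by
  apply SetLike.ext'
  apply Set.eq_of_subset_of_ncard_le h
  rwa [← Nat.card_coe_set_eq, ← Nat.card_coe_set_eq]

lemma conjSub_sInf (x : G) (S : Set (Subgroup G)) :
    conjSub x (sInf S) = sInf (conjSub x '' S) := by
  apply le_antisymm
  · apply le_sInf
    rintro M ⟨N, hN, rfl⟩
    exact conjSub_mono x (sInf_le hN)
  · have h : conjSub x⁻¹ (sInf (conjSub x '' S)) ≤ sInf S := by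
      apply le_sInf
      intro N hN
      have h1 : sInf (conjSub x '' S) ≤ conjSub x N := sInf_le ⟨N, hN, rfl⟩
      have h2 := conjSub_mono x⁻¹ h1
      rwa [conjSub_conjSub, inv_mul_cancel, conjSub_one] at h2
    have := conjSub_mono x h
    rwa [conjSub_conjSub, mul_inv_cancel, conjSub_one] at this

lemma HO_conjSub (O : TransferSystem G) (x : G) (J : Subgroup G) :
    HO O (conjSub x J) = conjSub x (HO O J) := by
  rw [HO, HO, conjSub_sInf]
  congr 1
  ext M
  constructor
  · rintro ⟨hrel, hle⟩
    refine ⟨conjSub x⁻¹ M, ⟨?_, ?_⟩, ?_⟩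
    · have := O.conj x⁻¹ hrel
      have ht : conjSub x⁻¹ (⊤ : Subgroup G) = ⊤ := conjSub_top _
      rw [show (⊤:Subgroup G).map (MulAut.conj x⁻¹).toMonoidHom = ⊤ from ht] at this
      exact this
    · have := conjSub_mono x⁻¹ hle
      rwa [conjSub_conjSub, inv_mul_cancel, conjSub_one] at this
    · rw [conjSub_conjSub, mul_inv_cancel, conjSub_one]
  · rintro ⟨N, ⟨hrel, hle⟩, rfl⟩
    refine ⟨?_, conjSub_mono x hle⟩
    have := O.conj x hrel
    have ht : conjSub x (⊤ : Subgroup G) = ⊤ := conjSub_top _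
    rw [show (⊤:Subgroup G).map (MulAut.conj x).toMonoidHom = ⊤ from ht] at this
    exact this

end Aux

/-- If `L` is above the class of `H` and `L ⊓ gHg⁻¹` lies in the class, then the normalizer
of `L ⊓ gHg⁻¹` in `L` equals `N_G(gHg⁻¹) ⊓ L`. -/
theorem normalizer_in_L_eq {G : Type*} [Group G] [Finite G] (O : TransferSystem G)
    {H L : Subgroup G} (hH : O.rel H ⊤)
    (habove : ∃ K : Subgroup G, inClass O H K ∧ K ≤ L) (g : G)
    (hLg : inClass O H (L ⊓ conjSub g H)) :
    Subgroup.normalizer ((L ⊓ conjSub g H : Subgroup G) : Set G) ⊓ L =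
      Subgroup.normalizer ((conjSub g H : Subgroup G) : Set G) ⊓ L := by
  set J := L ⊓ conjSub g H with hJ
  obtain ⟨a, ha⟩ := hLg
  have hcard : Nat.card (conjSub g H) ≤ Nat.card (HO O J) := by
    rw [← ha, card_conjSub, card_conjSub]
  have hle : HO O J ≤ conjSub g H := by
    apply sInf_le
    refine ⟨?_, inf_le_right⟩
    have := O.conj g hH
    have ht : conjSub g (⊤ : Subgroup G) = ⊤ := conjSub_top _
    rw [show (⊤:Subgroup G).map (MulAut.conj g).toMonoidHom = ⊤ from ht] at this
    exact this
  have hHOJ : HO O J = conjSub g H := subgroup_eq_of_le_of_card_le hle hcard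
  ext x
  simp only [Subgroup.mem_inf]
  constructor
  · rintro ⟨hn, hl⟩
    refine ⟨?_, hl⟩
    rw [mem_normalizer_iff_conjSub] at hn ⊢
    have h1 := HO_conjSub O x J
    rw [hn, hHOJ] at h1
    exact h1.symm
  · rintro ⟨hn, hl⟩
    refine ⟨?_, hl⟩
    rw [mem_normalizer_iff_conjSub] at hn ⊢
    have hLfix : conjSub x L = L :=
      mem_normalizer_iff_conjSub.mp (Subgroup.le_normalizer hl)
    rw [hJ, conjSub_inf, hLfix, hn]
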